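/- Let $U,W:[0,1]^6\to[0,1]$ be measurable. Define $I(U,W)(x_1,x_4)=\frac{1}{2}\int U(x_1,x_2,x_3,x_{12},x_{13},x_{23})W(x_2,x_3,x_4,x_{23},x_{24},x_{34})\,d(x_2,x_3,x_{12},x_{13},x_{23},x_{24},x_{34})$. Then $I$ is bilinear, $I(U,U)-I(W,U)=I(U-W,U)$, and $\|I(U-W,U)\|_\square \le \frac{1}{2}\|U-W\|_{\square,2}$. -/

import Mathlib

open MeasureTheory

noncomputable section

def I01 : Set ℝ := Set.Icc 0 1

def piI (n : ℕ) : Set (Fin n → ℝ) := Set.univ.pi fun _ => I01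

def cutNorm (F : ℝ → ℝ → ℝ) : ℝ :=
  sSup { c : ℝ | ∃ f g : ℝ → ℝ, Measurable f ∧ Measurable g ∧
    (∀ x, f x ∈ I01) ∧ (∀ x, g x ∈ I01) ∧
    c = |∫ x in I01, ∫ y in I01, F x y * f x * g y| }

/-- The `2`-cut norm for kernels on `[0,1]^6`, coordinates ordered
`(x₁, x₂, x₃, x₁₂, x₁₃, x₂₃)` = indices `(0,1,2,3,4,5)`. -/
def cutNorm2 (V : (Fin 6 → ℝ) → ℝ) : ℝ :=
  sSup { c : ℝ | ∃ f g h : (Fin 3 → ℝ) → ℝ,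
    Measurable f ∧ Measurable g ∧ Measurable h ∧
    (∀ x, f x ∈ I01) ∧ (∀ x, g x ∈ I01) ∧ (∀ x, h x ∈ I01) ∧
    c = |∫ x in piI 6, V x * f ![x 0, x 1, x 3] * g ![x 1, x 2, x 5] * h ![x 0, x 2, x 4]| }

/-- `I(U,W)(x₁,x₄) = ½∫ U(x₁,x₂,x₃,x₁₂,x₁₃,x₂₃) W(x₂,x₃,x₄,x₂₃,x₂₄,x₃₄)`. -/
def Ibil (U W : (Fin 6 → ℝ) → ℝ) (x₁ x₄ : ℝ) : ℝ :=
  (1 / 2) * ∫ z : Fin 7 → ℝ in piI 7,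
    U ![x₁, z 0, z 1, z 2, z 3, z 4] * W ![z 0, z 1, x₄, z 4, z 5, z 6]

namespace Aux9

def nu : Measure ℝ := volume.restrict I01

def pim (n : ℕ) : Measure (Fin n → ℝ) := Measure.pi fun _ : Fin n => nu

instance : IsProbabilityMeasure nu := ⟨by
  simp [nu, I01, Real.volume_Icc]⟩

instance (n : ℕ) : IsProbabilityMeasure (pim n) := by
  unfold pim; infer_instance

lemma restrict_piI (n : ℕ) : (volume : Measure (Fin n → ℝ)).restrict (piI n) = pim n := by
  refine (Measure.pi_eq (μ := fun _ : Fin n => nu) fun s hs => ?_).symm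
  rw [Measure.restrict_apply (MeasurableSet.univ_pi hs)]
  have h1 : Set.univ.pi s ∩ piI n = Set.univ.pi (fun i => s i ∩ I01) := by
    rw [piI, Set.pi_inter_distrib]
  rw [h1, volume_pi_pi]
  refine Finset.prod_congr rfl fun i _ => ?_
  rw [nu, Measure.restrict_apply (hs i)]

lemma integrable_of_bdd {α : Type*} [MeasurableSpace α] {μ : Measure α} [IsFiniteMeasure μ]
    {f : α → ℝ} (hf : Measurable f) {C : ℝ} (h : ∀ x, |f x| ≤ C) : Integrable f μ :=
  (integrable_const C).mono' hf.aestronglyMeasurable (Filter.Eventually.of_forall (by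
    simpa [Real.norm_eq_abs] using h))

lemma peel {n : ℕ} (F : (Fin (n + 1) → ℝ) → ℝ) (hF : Integrable F (pim (n + 1))) :
    ∫ y, F y ∂pim (n + 1) = ∫ a, ∫ t, F (Fin.cons a t) ∂pim n ∂nu := by
  have h : MeasurePreserving (MeasurableEquiv.piFinSuccAbove (fun _ : Fin (n + 1) => ℝ) 0)
      (pim (n + 1)) (nu.prod (pim n)) :=
    measurePreserving_piFinSuccAbove (fun _ => nu) 0
  have h2 := h.symm
  have hInt : Integrable
      (fun z : ℝ × (Fin n → ℝ) => F ((MeasurableEquiv.piFinSuccAbove (fun _ : Fin (n+1) => ℝ) 0).symm z))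
      (nu.prod (pim n)) := (h2.integrable_comp hF.aestronglyMeasurable).2 hF
  rw [← h2.integral_comp' F, integral_prod _ hInt]
  refine integral_congr_ae (Filter.Eventually.of_forall fun a => ?_)
  refine integral_congr_ae (Filter.Eventually.of_forall fun t => ?_)
  simp [MeasurableEquiv.piFinSuccAbove, Fin.insertNthEquiv, Fin.insertNth_zero']

def tau : Equiv.Perm (Fin 9) :=
  ⟨![0, 6, 1, 2, 3, 4, 5, 7, 8], ![0, 2, 3, 4, 5, 6, 1, 7, 8], by decide, by decide⟩

lemma perm_integral (F : (Fin 9 → ℝ) → ℝ) :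
    ∫ y, F ((MeasurableEquiv.piCongrLeft (fun _ : Fin 9 => ℝ) tau) y) ∂pim 9
      = ∫ y, F y ∂pim 9 :=
  (measurePreserving_piCongrLeft (fun _ : Fin 9 => nu) tau).integral_comp' F

lemma piCongrLeft_perm_eval (e : Equiv.Perm (Fin 9)) (c : Fin 9 → ℝ) :
    (MeasurableEquiv.piCongrLeft (fun _ : Fin 9 => ℝ) e c) = fun i => c (e.symm i) := by
  funext i
  have h := MeasurableEquiv.piCongrLeft_apply_apply e (β := fun _ : Fin 9 => ℝ) c (e.symm i)
  simpa using h

def spl : (Fin 9 → ℝ) ≃ᵐ (Fin 6 → ℝ) × (Fin 3 → ℝ) :=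
  (MeasurableEquiv.piCongrLeft (fun _ : Fin 9 => ℝ) finSumFinEquiv).symm.trans
    (MeasurableEquiv.sumPiEquivProdPi fun _ => ℝ)

lemma spl_mp : MeasurePreserving spl (pim 9) ((pim 6).prod (pim 3)) := by
  have h1 : MeasurePreserving
      (MeasurableEquiv.piCongrLeft (fun _ : Fin 9 => ℝ) finSumFinEquiv).symm
      (pim 9) (Measure.pi fun _ : Fin 6 ⊕ Fin 3 => nu) :=
    MeasurePreserving.symm _ (measurePreserving_piCongrLeft (fun _ : Fin 9 => nu)
      (finSumFinEquiv : Fin 6 ⊕ Fin 3 ≃ Fin 9))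
  have h2 := measurePreserving_sumPiEquivProdPi (X := fun _ : Fin 6 ⊕ Fin 3 => ℝ)
    (μ := fun _ => nu)
  exact h2.comp h1

lemma spl_symm_eval (x : Fin 6 → ℝ) (w : Fin 3 → ℝ) :
    spl.symm (x, w) = ![x 0, x 1, x 2, x 3, x 4, x 5, w 0, w 1, w 2] := by
  have key : ∀ s : Fin 6 ⊕ Fin 3, spl.symm (x, w) (finSumFinEquiv s) = Sum.elim x w s := by
    intro s
    show (MeasurableEquiv.piCongrLeft (fun _ : Fin 9 => ℝ) finSumFinEquiv)
        (((MeasurableEquiv.sumPiEquivProdPi (fun _ : Fin 6 ⊕ Fin 3 => ℝ)).symm) (x, w))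
        (finSumFinEquiv s) = Sum.elim x w s
    rw [MeasurableEquiv.piCongrLeft_apply_apply]
    cases s <;> rfl
  funext i
  fin_cases i
  · exact key (Sum.inl 0)
  · exact key (Sum.inl 1)
  · exact key (Sum.inl 2)
  · exact key (Sum.inl 3)
  · exact key (Sum.inl 4)
  · exact key (Sum.inl 5)
  · exact key (Sum.inr 0)
  · exact key (Sum.inr 1)
  · exact key (Sum.inr 2)

lemma split_integral (F : (Fin 9 → ℝ) → ℝ) (hF : Integrable F (pim 9)) :
    ∫ y, F y ∂pim 9 = ∫ x, ∫ w, F (spl.symm (x, w)) ∂pim 3 ∂pim 6 := by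
  have h2 := spl_mp.symm spl
  have hInt : Integrable (fun p : (Fin 6 → ℝ) × (Fin 3 → ℝ) => F (spl.symm p))
      ((pim 6).prod (pim 3)) := (h2.integrable_comp hF.aestronglyMeasurable).2 hF
  rw [← h2.integral_comp' F, integral_prod _ hInt]

lemma mem_abs_le_one {x : ℝ} (h : x ∈ I01) : |x| ≤ 1 := by
  have h1 : (0:ℝ) ≤ x := h.1
  have h2 : x ≤ 1 := h.2
  rw [abs_le]; constructor <;> linarith

lemma abs_mul_le_one {a b : ℝ} (ha : |a| ≤ 1) (hb : |b| ≤ 1) : |a * b| ≤ 1 := by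
  rw [abs_mul]
  nlinarith [abs_nonneg a, abs_nonneg b]

lemma mul_le_one_I01 {a b : ℝ} (ha : a ∈ I01) (hb : b ∈ I01) : a * b ≤ 1 := by
  have h1 : (0:ℝ) ≤ a := ha.1
  have h2 : a ≤ 1 := ha.2
  have h3 : (0:ℝ) ≤ b := hb.1
  have h4 : b ≤ 1 := hb.2
  nlinarith

lemma measurable_cons {n : ℕ} (a : ℝ) :
    Measurable fun t : Fin n → ℝ => (Fin.cons a t : Fin (n + 1) → ℝ) :=
  measurable_pi_lambda _ fun i => Fin.cases measurable_const (fun j => measurable_pi_apply j) i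

lemma measurable_vec6 {α : Type*} [MeasurableSpace α] {a b c d e f' : α → ℝ}
    (ha : Measurable a) (hb : Measurable b) (hc : Measurable c) (hd : Measurable d)
    (he : Measurable e) (hf : Measurable f') :
    Measurable fun x => (![a x, b x, c x, d x, e x, f' x] : Fin 6 → ℝ) :=
  measurable_pi_lambda _ fun i => by
    fin_cases i <;> first | exact ha | exact hb | exact hc | exact hd | exact he | exact hf

lemma vec_eta (x : Fin 6 → ℝ) : ![x 0, x 1, x 2, x 3, x 4, x 5] = x := by
  funext i; fin_cases i <;> rfl

def PsiDef (V U : (Fin 6 → ℝ) → ℝ) (f g : ℝ → ℝ) : (Fin 9 → ℝ) → ℝ := fun y =>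
  V ![y 0, y 1, y 2, y 3, y 4, y 5] * U ![y 1, y 2, y 6, y 5, y 7, y 8] * (f (y 0) * g (y 6))

def PsiT (V U : (Fin 6 → ℝ) → ℝ) (f g : ℝ → ℝ) : (Fin 9 → ℝ) → ℝ := fun y =>
  PsiDef V U f g ((MeasurableEquiv.piCongrLeft (fun _ : Fin 9 => ℝ) tau) y)

lemma PsiT_integral (V U : (Fin 6 → ℝ) → ℝ) (f g : ℝ → ℝ) :
    ∫ y, PsiT V U f g y ∂pim 9 = ∫ y, PsiDef V U f g y ∂pim 9 :=
  perm_integral (PsiDef V U f g)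

lemma PsiT_cons_eval (V U : (Fin 6 → ℝ) → ℝ) (f g : ℝ → ℝ) (x₁ x₄ : ℝ) (z : Fin 7 → ℝ) :
    PsiT V U f g (Fin.cons x₁ (Fin.cons x₄ z))
      = V ![x₁, z 0, z 1, z 2, z 3, z 4] * U ![z 0, z 1, x₄, z 4, z 5, z 6] * (f x₁ * g x₄) := by
  show PsiDef V U f g _ = _
  rw [piCongrLeft_perm_eval]
  rfl

lemma PsiDef_spl_eval (V U : (Fin 6 → ℝ) → ℝ) (f g : ℝ → ℝ) (x : Fin 6 → ℝ) (w : Fin 3 → ℝ) :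
    PsiDef V U f g (spl.symm (x, w))
      = V ![x 0, x 1, x 2, x 3, x 4, x 5] * U ![x 1, x 2, w 0, x 5, w 1, w 2] * (f (x 0) * g (w 0)) := by
  rw [spl_symm_eval]
  rfl

def Ff (f : ℝ → ℝ) : (Fin 3 → ℝ) → ℝ := fun t => f (t 0)

def Gg (U : (Fin 6 → ℝ) → ℝ) (g : ℝ → ℝ) : (Fin 3 → ℝ) → ℝ := fun t =>
  ∫ w, U ![t 0, t 1, w 0, t 2, w 1, w 2] * g (w 0) ∂pim 3

def Hh : (Fin 3 → ℝ) → ℝ := fun _ => 1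

end Aux9

open Aux9

theorem stmt9 (U W : (Fin 6 → ℝ) → ℝ)
    (hUmeas : Measurable U) (hWmeas : Measurable W)
    (hUrange : ∀ x, U x ∈ I01) (hWrange : ∀ x, W x ∈ I01) :
    -- bilinearity of `I` (on bounded measurable arguments)
    (∀ (a b : ℝ) (U₁ U₂ W' : (Fin 6 → ℝ) → ℝ),
      Measurable U₁ → Measurable U₂ → Measurable W' →
      (∀ x, U₁ x ∈ I01) → (∀ x, U₂ x ∈ I01) → (∀ x, W' x ∈ I01) →
      ∀ x₁ x₄,
        Ibil (fun x => a * U₁ x + b * U₂ x) W' x₁ x₄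
            = a * Ibil U₁ W' x₁ x₄ + b * Ibil U₂ W' x₁ x₄
          ∧ Ibil W' (fun x => a * U₁ x + b * U₂ x) x₁ x₄
            = a * Ibil W' U₁ x₁ x₄ + b * Ibil W' U₂ x₁ x₄)
    -- `I(U,U) - I(W,U) = I(U - W, U)`
    ∧ (∀ x₁ x₄, Ibil U U x₁ x₄ - Ibil W U x₁ x₄ = Ibil (fun x => U x - W x) U x₁ x₄)
    -- `‖I(U-W, U)‖_□ ≤ ½ ‖U - W‖_{□,2}`
    ∧ cutNorm (Ibil (fun x => U x - W x) U) ≤ (1 / 2) * cutNorm2 (fun x => U x - W x) := by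
  -- common integrability helper on `pim 7`
  have hv : ∀ x₁ : ℝ, Measurable fun z : Fin 7 → ℝ => (![x₁, z 0, z 1, z 2, z 3, z 4] : Fin 6 → ℝ) :=
    fun x₁ => measurable_vec6 measurable_const (measurable_pi_apply _) (measurable_pi_apply _)
      (measurable_pi_apply _) (measurable_pi_apply _) (measurable_pi_apply _)
  have hw : ∀ x₄ : ℝ, Measurable fun z : Fin 7 → ℝ => (![z 0, z 1, x₄, z 4, z 5, z 6] : Fin 6 → ℝ) :=
    fun x₄ => measurable_vec6 (measurable_pi_apply _) (measurable_pi_apply _) measurable_const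
      (measurable_pi_apply _) (measurable_pi_apply _) (measurable_pi_apply _)
  have hint : ∀ (A B : (Fin 6 → ℝ) → ℝ), Measurable A → Measurable B →
      (∀ x, A x ∈ I01) → (∀ x, B x ∈ I01) → ∀ x₁ x₄ : ℝ,
      Integrable (fun z : Fin 7 → ℝ =>
        A ![x₁, z 0, z 1, z 2, z 3, z 4] * B ![z 0, z 1, x₄, z 4, z 5, z 6]) (pim 7) := by
    intro A B hA hB rA rB x₁ x₄
    exact integrable_of_bdd ((hA.comp (hv x₁)).mul (hB.comp (hw x₄)))
      (fun z => abs_mul_le_one (mem_abs_le_one (rA _)) (mem_abs_le_one (rB _)))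
  refine ⟨?_, ?_, ?_⟩
  · intro a b U₁ U₂ W' hU₁ hU₂ hW' r₁ r₂ r₃ x₁ x₄
    constructor
    · unfold Ibil
      rw [restrict_piI]
      have e : (∫ z : Fin 7 → ℝ, (fun x => a * U₁ x + b * U₂ x) ![x₁, z 0, z 1, z 2, z 3, z 4]
            * W' ![z 0, z 1, x₄, z 4, z 5, z 6] ∂pim 7)
          = ∫ z : Fin 7 → ℝ, (a * (U₁ ![x₁, z 0, z 1, z 2, z 3, z 4] * W' ![z 0, z 1, x₄, z 4, z 5, z 6])
            + b * (U₂ ![x₁, z 0, z 1, z 2, z 3, z 4] * W' ![z 0, z 1, x₄, z 4, z 5, z 6])) ∂pim 7 :=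
        integral_congr_ae (Filter.Eventually.of_forall fun z => by ring)
      rw [e, integral_add ((hint U₁ W' hU₁ hW' r₁ r₃ x₁ x₄).const_mul a)
        ((hint U₂ W' hU₂ hW' r₂ r₃ x₁ x₄).const_mul b), integral_const_mul, integral_const_mul]
      ring
    · unfold Ibil
      rw [restrict_piI]
      have e : (∫ z : Fin 7 → ℝ, W' ![x₁, z 0, z 1, z 2, z 3, z 4]
            * (fun x => a * U₁ x + b * U₂ x) ![z 0, z 1, x₄, z 4, z 5, z 6] ∂pim 7)
          = ∫ z : Fin 7 → ℝ, (a * (W' ![x₁, z 0, z 1, z 2, z 3, z 4] * U₁ ![z 0, z 1, x₄, z 4, z 5, z 6])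
            + b * (W' ![x₁, z 0, z 1, z 2, z 3, z 4] * U₂ ![z 0, z 1, x₄, z 4, z 5, z 6])) ∂pim 7 :=
        integral_congr_ae (Filter.Eventually.of_forall fun z => by ring)
      rw [e, integral_add ((hint W' U₁ hW' hU₁ r₃ r₁ x₁ x₄).const_mul a)
        ((hint W' U₂ hW' hU₂ r₃ r₂ x₁ x₄).const_mul b), integral_const_mul, integral_const_mul]
      ring
  · intro x₁ x₄
    unfold Ibil
    rw [restrict_piI]
    have e : (∫ z : Fin 7 → ℝ, (fun x => U x - W x) ![x₁, z 0, z 1, z 2, z 3, z 4]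
          * U ![z 0, z 1, x₄, z 4, z 5, z 6] ∂pim 7)
        = ∫ z : Fin 7 → ℝ, (U ![x₁, z 0, z 1, z 2, z 3, z 4] * U ![z 0, z 1, x₄, z 4, z 5, z 6]
          - W ![x₁, z 0, z 1, z 2, z 3, z 4] * U ![z 0, z 1, x₄, z 4, z 5, z 6]) ∂pim 7 :=
      integral_congr_ae (Filter.Eventually.of_forall fun z => by ring)
    rw [e, integral_sub (hint U U hUmeas hUmeas hUrange hUrange x₁ x₄)
      (hint W U hWmeas hUmeas hWrange hUrange x₁ x₄)]
    ring
  · set V : (Fin 6 → ℝ) → ℝ := fun x => U x - W x with hVdef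
    have hVmeas : Measurable V := hUmeas.sub hWmeas
    have hVbd : ∀ x, |V x| ≤ 1 := by
      intro x
      have h1 : (0:ℝ) ≤ U x := (hUrange x).1
      have h2 : U x ≤ 1 := (hUrange x).2
      have h3 : (0:ℝ) ≤ W x := (hWrange x).1
      have h4 : W x ≤ 1 := (hWrange x).2
      rw [abs_le]
      constructor <;> simp only [hVdef] <;> linarith
    have hBdd : BddAbove { c : ℝ | ∃ f g h : (Fin 3 → ℝ) → ℝ,
        Measurable f ∧ Measurable g ∧ Measurable h ∧
        (∀ x, f x ∈ I01) ∧ (∀ x, g x ∈ I01) ∧ (∀ x, h x ∈ I01) ∧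
        c = |∫ x in piI 6, V x * f ![x 0, x 1, x 3] * g ![x 1, x 2, x 5] * h ![x 0, x 2, x 4]| } := by
      refine ⟨1, ?_⟩
      rintro c ⟨f, g, h, hf, hg, hh, rf, rg, rh, rfl⟩
      rw [restrict_piI]
      have hb : ∀ x : Fin 6 → ℝ,
          ‖V x * f ![x 0, x 1, x 3] * g ![x 1, x 2, x 5] * h ![x 0, x 2, x 4]‖ ≤ 1 := by
        intro x
        rw [Real.norm_eq_abs]
        exact abs_mul_le_one (abs_mul_le_one (abs_mul_le_one (hVbd x)
          (mem_abs_le_one (rf _))) (mem_abs_le_one (rg _))) (mem_abs_le_one (rh _))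
      have := norm_integral_le_of_norm_le_const (μ := pim 6) (C := 1)
        (Filter.Eventually.of_forall hb)
      simpa [Real.norm_eq_abs] using this
    have h0mem : (0:ℝ) ∈ { c : ℝ | ∃ f g h : (Fin 3 → ℝ) → ℝ,
        Measurable f ∧ Measurable g ∧ Measurable h ∧
        (∀ x, f x ∈ I01) ∧ (∀ x, g x ∈ I01) ∧ (∀ x, h x ∈ I01) ∧
        c = |∫ x in piI 6, V x * f ![x 0, x 1, x 3] * g ![x 1, x 2, x 5] * h ![x 0, x 2, x 4]| } :=
      ⟨fun _ => 0, fun _ => 0, fun _ => 0, measurable_const, measurable_const, measurable_const,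
        fun _ => ⟨le_refl 0, zero_le_one⟩, fun _ => ⟨le_refl 0, zero_le_one⟩,
        fun _ => ⟨le_refl 0, zero_le_one⟩, by simp⟩
    have hc2 : 0 ≤ cutNorm2 V := by
      unfold cutNorm2
      exact le_csSup hBdd h0mem
    unfold cutNorm
    refine Real.sSup_le ?_ (by positivity)
    rintro c ⟨f, g, hf, hg, rf, rg, rfl⟩
    -- properties of the witnesses
    have hFmeas : Measurable (Ff f) := hf.comp (measurable_pi_apply 0)
    have hFr : ∀ t, Ff f t ∈ I01 := fun t => rf _
    have hKmeas : Measurable fun p : (Fin 3 → ℝ) × (Fin 3 → ℝ) =>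
        U ![p.1 0, p.1 1, p.2 0, p.1 2, p.2 1, p.2 2] * g (p.2 0) := by
      refine (hUmeas.comp (measurable_vec6 ?_ ?_ ?_ ?_ ?_ ?_)).mul
        (hg.comp ((measurable_pi_apply 0).comp measurable_snd)) <;>
      · first
        | exact (measurable_pi_apply _).comp measurable_fst
        | exact (measurable_pi_apply _).comp measurable_snd
    have hGmeas : Measurable (Gg U g) :=
      hKmeas.stronglyMeasurable.integral_prod_right'.measurable
    have hGint : ∀ t : Fin 3 → ℝ, Integrable
        (fun w : Fin 3 → ℝ => U ![t 0, t 1, w 0, t 2, w 1, w 2] * g (w 0)) (pim 3) := by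
      intro t
      refine integrable_of_bdd ((hUmeas.comp (measurable_vec6 measurable_const measurable_const
        (measurable_pi_apply _) measurable_const (measurable_pi_apply _)
        (measurable_pi_apply _))).mul (hg.comp (measurable_pi_apply 0)))
        (fun w => abs_mul_le_one (mem_abs_le_one (hUrange _)) (mem_abs_le_one (rg _)))
    have hGr : ∀ t, Gg U g t ∈ I01 := by
      intro t
      constructor
      · exact integral_nonneg fun w => mul_nonneg (hUrange _).1 (rg _).1
      · calc Gg U g t ≤ ∫ _, (1:ℝ) ∂pim 3 :=
              integral_mono (hGint t) (integrable_const 1)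
                (fun w => mul_le_one_I01 (hUrange _) (rg _))
          _ = 1 := by simp
    have hHmeas : Measurable Hh := measurable_const
    have hHr : ∀ t, Hh t ∈ I01 := fun _ => ⟨zero_le_one, le_refl 1⟩
    -- Psi facts
    have hPsimeas : Measurable (PsiDef V U f g) := by
      refine ((hVmeas.comp (measurable_vec6 ?p0 ?p1 ?p2 ?p3 ?p4 ?p5)).mul
        (hUmeas.comp (measurable_vec6 ?q0 ?q1 ?q2 ?q3 ?q4 ?q5))).mul
        ((hf.comp (measurable_pi_apply 0)).mul (hg.comp (measurable_pi_apply 6))) <;>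
      exact measurable_pi_apply _
    have hPsibd : ∀ y, |PsiDef V U f g y| ≤ 1 := fun y =>
      abs_mul_le_one (abs_mul_le_one (hVbd _) (mem_abs_le_one (hUrange _)))
        (abs_mul_le_one (mem_abs_le_one (rf _)) (mem_abs_le_one (rg _)))
    have hPsiInt : Integrable (PsiDef V U f g) (pim 9) := integrable_of_bdd hPsimeas hPsibd
    have hPsiTmeas : Measurable (PsiT V U f g) :=
      hPsimeas.comp (MeasurableEquiv.measurable _)
    have hPsiTInt : Integrable (PsiT V U f g) (pim 9) :=
      integrable_of_bdd hPsiTmeas (fun y => hPsibd _)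
    -- key identity, left part
    have key : (∫ x₁, ∫ x₄, Ibil V U x₁ x₄ * f x₁ * g x₄ ∂nu ∂nu)
        = 1 / 2 * ∫ y, PsiDef V U f g y ∂pim 9 := by
      have e1 : ∀ x₁ x₄ : ℝ, Ibil V U x₁ x₄ * f x₁ * g x₄
          = 1 / 2 * ∫ z, PsiT V U f g (Fin.cons x₁ (Fin.cons x₄ z)) ∂pim 7 := by
        intro x₁ x₄
        have h1 : (∫ z, PsiT V U f g (Fin.cons x₁ (Fin.cons x₄ z)) ∂pim 7)
            = ∫ z : Fin 7 → ℝ, (V ![x₁, z 0, z 1, z 2, z 3, z 4]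
                * U ![z 0, z 1, x₄, z 4, z 5, z 6]) * (f x₁ * g x₄) ∂pim 7 :=
          integral_congr_ae (Filter.Eventually.of_forall fun z =>
            PsiT_cons_eval V U f g x₁ x₄ z)
        rw [h1, integral_mul_const]
        unfold Ibil
        rw [restrict_piI]
        ring
      simp only [e1, integral_const_mul]
      congr 1
      rw [← PsiT_integral V U f g]
      have p1 : (∫ y, PsiT V U f g y ∂pim 9)
          = ∫ a, ∫ t, PsiT V U f g (Fin.cons a t) ∂pim 8 ∂nu := peel _ hPsiTInt
      rw [p1]
      refine integral_congr_ae (Filter.Eventually.of_forall fun x₁ => ?_)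
      have p2 : (∫ t, PsiT V U f g (Fin.cons x₁ t) ∂pim 8)
          = ∫ b, ∫ z, PsiT V U f g (Fin.cons x₁ (Fin.cons b z)) ∂pim 7 ∂nu :=
        peel _ (integrable_of_bdd (hPsiTmeas.comp (measurable_cons x₁)) (fun t => hPsibd _))
      exact p2.symm
    -- key identity, right part
    have key2 : (∫ y, PsiDef V U f g y ∂pim 9)
        = ∫ x in piI 6, V x * Ff f ![x 0, x 1, x 3] * Gg U g ![x 1, x 2, x 5]
            * Hh ![x 0, x 2, x 4] := by
      rw [restrict_piI, split_integral _ hPsiInt]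
      refine integral_congr_ae (Filter.Eventually.of_forall fun x => ?_)
      have e2 : ∀ w : Fin 3 → ℝ, PsiDef V U f g (spl.symm (x, w))
          = (V x * f (x 0)) * (U ![x 1, x 2, w 0, x 5, w 1, w 2] * g (w 0)) := by
        intro w
        rw [PsiDef_spl_eval, vec_eta]
        ring
      simp only [e2, integral_const_mul]
      show (V x * f (x 0)) * Gg U g ![x 1, x 2, x 5]
        = V x * Ff f ![x 0, x 1, x 3] * Gg U g ![x 1, x 2, x 5] * Hh ![x 0, x 2, x 4]
      show (V x * f (x 0)) * Gg U g ![x 1, x 2, x 5]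
        = V x * f (x 0) * Gg U g ![x 1, x 2, x 5] * 1
      ring
    have keyI : (∫ x₁ in I01, ∫ x₄ in I01, Ibil V U x₁ x₄ * f x₁ * g x₄)
        = 1 / 2 * ∫ x in piI 6, V x * Ff f ![x 0, x 1, x 3] * Gg U g ![x 1, x 2, x 5]
            * Hh ![x 0, x 2, x 4] := by
      show (∫ x₁, ∫ x₄, Ibil V U x₁ x₄ * f x₁ * g x₄ ∂nu ∂nu) = _
      rw [key, key2]
    rw [keyI, abs_mul, abs_of_nonneg (by norm_num : (0:ℝ) ≤ 1/2)]
    have hle : |∫ x in piI 6, V x * Ff f ![x 0, x 1, x 3] * Gg U g ![x 1, x 2, x 5]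
        * Hh ![x 0, x 2, x 4]| ≤ cutNorm2 V := by
      unfold cutNorm2
      exact le_csSup hBdd ⟨Ff f, Gg U g, Hh, hFmeas, hGmeas, hHmeas, hFr, hGr, hHr, rfl⟩
    exact mul_le_mul_of_nonneg_left hle (by norm_num)
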